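/- arXiv:2212.06255 — 4 statements merged into one kernel-verified Lean document; each statement's English description precedes it below -/
import Mathlib

section
/- Let U be a topological group with a complete metric inducing its topology, and let G ≤ U be a compact subgroup. If (Gₙ) is a sequence of closed subgroups of U such that for every open neighborhood V of G, Gₙ ⊆ V for all sufficiently large n (0-weak convergence to G), then some subsequence of (Gₙ) converges in the Hausdorff distance to a closed subgroup H of G. -/
open Filter Metric EMetric Set
open scoped ENNReal NNReal

private lemma aux_mem_of_approx {U : Type*} [MetricSpace U] {S : ℕ → Set U} {H₀ : Set U}
    (hcl : IsClosed H₀)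
    (hlim : Tendsto (fun j => hausdorffEdist (S j) H₀) atTop (nhds 0))
    {y : ℕ → U} (hy : ∀ᶠ j in atTop, y j ∈ S j) {z : U}
    (hz : Tendsto y atTop (nhds z)) : z ∈ H₀ := by
  have hed : Tendsto (fun j => edist z (y j)) atTop (nhds 0) := by
    simpa using (tendsto_const_nhds : Tendsto (fun _ : ℕ => z) atTop (nhds z)).edist hz
  have hsum : Tendsto (fun j => edist z (y j) + hausdorffEdist (S j) H₀) atTop (nhds 0) := by
    simpa using hed.add hlim
  have hle : ∀ᶠ j in atTop, infEdist z H₀ ≤ edist z (y j) + hausdorffEdist (S j) H₀ := by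
    filter_upwards [hy] with j hj
    calc infEdist z H₀ ≤ infEdist (y j) H₀ + edist z (y j) := infEdist_le_infEdist_add_edist
      _ ≤ hausdorffEdist (S j) H₀ + edist z (y j) := by
          gcongr; exact infEdist_le_hausdorffEdist_of_mem hj
      _ = edist z (y j) + hausdorffEdist (S j) H₀ := add_comm _ _
  have h0 : infEdist z H₀ ≤ 0 := ge_of_tendsto hsum hle
  have : z ∈ closure H₀ := mem_closure_iff_infEdist_zero.2 (le_antisymm h0 zero_le)
  rwa [hcl.closure_eq] at this

private lemma aux_exists_approx {U : Type*} [MetricSpace U] {S : ℕ → Set U}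
    (hne : ∀ j, (S j).Nonempty) {H₀ : Set U}
    (hlim : Tendsto (fun j => hausdorffEdist (S j) H₀) atTop (nhds 0))
    {x : U} (hx : x ∈ H₀) :
    ∃ y : ℕ → U, (∀ j, y j ∈ S j) ∧ Tendsto y atTop (nhds x) := by
  classical
  set c : ℕ → ℝ≥0∞ := fun j => ENNReal.ofReal (1 / (j + 1)) with hc
  have hcpos : ∀ j, 0 < c j := fun j => ENNReal.ofReal_pos.2 (by positivity)
  have hctend : Tendsto c atTop (nhds 0) := by
    rw [hc]; simpa using ENNReal.tendsto_ofReal tendsto_one_div_add_atTop_nhds_zero_nat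
  set P : ℕ → Prop := fun j => ∃ z ∈ S j, edist x z < hausdorffEdist (S j) H₀ + c j with hP
  set y : ℕ → U := fun j => if h : P j then h.choose else (hne j).choose with hy
  have hymem : ∀ j, y j ∈ S j := by
    intro j
    by_cases h : P j
    · simp only [hy, dif_pos h]; exact h.choose_spec.1
    · simp only [hy, dif_neg h]; exact (hne j).choose_spec
  refine ⟨y, hymem, ?_⟩
  have hPev : ∀ᶠ j in atTop, P j := by
    filter_upwards [hlim.eventually_lt_const (by norm_num : (0 : ℝ≥0∞) < 1)] with j hj
    have hfin : hausdorffEdist (S j) H₀ ≠ ⊤ := ne_top_of_lt hj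
    have h1 : infEdist x (S j) ≤ hausdorffEdist (S j) H₀ := by
      exact (infEdist_le_hausdorffEdist_of_mem hx).trans_eq hausdorffEdist_comm
    have h2 : infEdist x (S j) < hausdorffEdist (S j) H₀ + c j :=
      lt_of_le_of_lt h1 (ENNReal.lt_add_right hfin (hcpos j).ne')
    exact infEdist_lt_iff.mp h2
  have hub : ∀ᶠ j in atTop, edist x (y j) ≤ hausdorffEdist (S j) H₀ + c j := by
    filter_upwards [hPev] with j hj
    simp only [hy, dif_pos hj]
    exact hj.choose_spec.2.le
  have hupper : Tendsto (fun j => hausdorffEdist (S j) H₀ + c j) atTop (nhds 0) := by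
    simpa using hlim.add hctend
  have hed : Tendsto (fun j => edist x (y j)) atTop (nhds 0) :=
    tendsto_of_tendsto_of_tendsto_of_le_of_le' tendsto_const_nhds hupper
      (Eventually.of_forall fun j => zero_le) hub
  rw [EMetric.tendsto_nhds]
  intro ε hε
  filter_upwards [hed.eventually_lt_const hε] with j hj
  rwa [edist_comm]

/-- A 0-weakly convergent sequence of closed subgroups of a completely metrized
topological group, converging to a compact subgroup `G`, has a subsequence
converging in Hausdorff distance to a closed subgroup `H ≤ G`. -/
theorem stmt_0 {U : Type*} [MetricSpace U] [CompleteSpace U] [Group U]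
    [IsTopologicalGroup U]
    (G : Subgroup U) (hG : IsCompact (G : Set U))
    (Gn : ℕ → Subgroup U) (hcl : ∀ n, IsClosed ((Gn n : Set U)))
    (hweak : ∀ V : Set U, IsOpen V → (G : Set U) ⊆ V →
      ∀ᶠ n in atTop, (Gn n : Set U) ⊆ V) :
    ∃ (H : Subgroup U) (φ : ℕ → ℕ), StrictMono φ ∧ IsClosed (H : Set U) ∧ H ≤ G ∧
      Tendsto (fun k => Metric.hausdorffDist ((Gn (φ k) : Set U)) (H : Set U))
        atTop (nhds 0) := by
  classical
  -- extract a subsequence ψ with `Gn (ψ k) ⊆ thickening (1/(k+1)) G`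
  have hweak' : ∀ k : ℕ, ∀ᶠ n in atTop,
      (Gn n : Set U) ⊆ Metric.thickening (1 / (k + 1)) (G : Set U) := fun k =>
    hweak _ isOpen_thickening (self_subset_thickening (by positivity) _)
  obtain ⟨ψ, hψmono, hψ⟩ := Filter.extraction_forall_of_eventually hweak'
  haveI : CompactSpace (G : Set U) := isCompact_iff_compactSpace.mp hG
  set c : ℕ → ℝ≥0∞ := fun k => ENNReal.ofReal (1 / (k + 1)) with hc
  have hctend : Tendsto c atTop (nhds 0) := by
    rw [hc]; simpa using ENNReal.tendsto_ofReal tendsto_one_div_add_atTop_nhds_zero_nat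
  -- the "shadow" of `Gn (ψ k)` on `G`
  set Q : ℕ → Set (G : Set U) :=
    fun k => {g | infEdist (g : U) (Gn (ψ k) : Set U) ≤ c k} with hQ
  have hQcl : ∀ k, IsClosed (Q k) := by
    intro k
    exact isClosed_le (continuous_infEdist.comp continuous_subtype_val) continuous_const
  have hQne : ∀ k, (Q k).Nonempty := by
    intro k
    exact ⟨⟨1, G.one_mem⟩, by
      simp only [hQ, mem_setOf_eq]
      rw [show infEdist (1 : U) (Gn (ψ k) : Set U) = 0 from infEdist_zero_of_mem (by exact (Gn (ψ k)).one_mem)]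
      exact zero_le⟩
  set QC : ℕ → TopologicalSpace.NonemptyCompacts (G : Set U) :=
    fun k => ⟨⟨Q k, (hQcl k).isCompact⟩, hQne k⟩ with hQC
  obtain ⟨Hc, σ, hσmono, hσlim⟩ := CompactSpace.tendsto_subseq QC
  set H₀ : Set U := Subtype.val '' (Hc : Set (G : Set U)) with hH₀
  have hH₀cpt : IsCompact H₀ := Hc.isCompact.image continuous_subtype_val
  have hH₀cl : IsClosed H₀ := hH₀cpt.isClosed
  set S : ℕ → Set U := fun j => (Gn (ψ (σ j)) : Set U) with hS
  have hSne : ∀ j, (S j).Nonempty := fun j => ⟨1, (Gn (ψ (σ j))).one_mem⟩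
  -- distance from `Gn (ψ k)` to the shadow
  have hshadow : ∀ k, hausdorffEdist (Gn (ψ k) : Set U) (Subtype.val '' Q k) ≤ c k + c k := by
    intro k
    apply hausdorffEdist_le_of_infEdist
    · intro x hx
      have hxth := hψ k hx
      rw [mem_thickening_iff_infEdist_lt] at hxth
      obtain ⟨z, hzG, hz⟩ := infEdist_lt_iff.mp hxth
      have hzQ : (⟨z, hzG⟩ : (G : Set U)) ∈ Q k := by
        simp only [hQ, mem_setOf_eq]
        calc infEdist z (Gn (ψ k) : Set U) ≤ edist z x := infEdist_le_edist_of_mem hx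
          _ = edist x z := edist_comm _ _
          _ ≤ c k := hz.le
      calc infEdist x (Subtype.val '' Q k) ≤ edist x z :=
            infEdist_le_edist_of_mem ⟨⟨z, hzG⟩, hzQ, rfl⟩
        _ ≤ c k := hz.le
        _ ≤ c k + c k := le_self_add
    · rintro x ⟨g, hgQ, rfl⟩
      exact le_trans hgQ (le_add_self.trans (le_refl _))
  -- the shadows converge to Hc in Hausdorff edistance
  have hQlim : Tendsto (fun j => edist (QC (σ j)) Hc) atTop (nhds 0) := by
    simpa using hσlim.edist (tendsto_const_nhds : Tendsto (fun _ : ℕ => Hc) atTop (nhds Hc))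
  have hedist_eq : ∀ j, edist (QC (σ j)) Hc =
      hausdorffEdist (Subtype.val '' Q (σ j)) H₀ := by
    intro j
    have : edist (QC (σ j)) Hc =
        hausdorffEdist ((QC (σ j) : Set (G : Set U))) (Hc : Set (G : Set U)) := rfl
    rw [this, ← show ∀ s t : Set (G : Set U), hausdorffEdist (Subtype.val '' s) (Subtype.val '' t) = hausdorffEdist s t from fun s t => hausdorffEdist_image isometry_subtype_coe]
    rfl
  -- main convergence in Hausdorff edistance
  have hmain : Tendsto (fun j => hausdorffEdist (S j) H₀) atTop (nhds 0) := by
    have hub : ∀ j, hausdorffEdist (S j) H₀ ≤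
        (c (σ j) + c (σ j)) + edist (QC (σ j)) Hc := by
      intro j
      calc hausdorffEdist (S j) H₀ ≤
          hausdorffEdist (S j) (Subtype.val '' Q (σ j)) +
            hausdorffEdist (Subtype.val '' Q (σ j)) H₀ := hausdorffEdist_triangle
        _ ≤ (c (σ j) + c (σ j)) + edist (QC (σ j)) Hc := by
            rw [hedist_eq j]; gcongr; exact hshadow (σ j)
    have hcσ : Tendsto (fun j => c (σ j)) atTop (nhds 0) :=
      hctend.comp hσmono.tendsto_atTop
    have hupper : Tendsto (fun j => (c (σ j) + c (σ j)) + edist (QC (σ j)) Hc)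
        atTop (nhds 0) := by
      simpa using (hcσ.add hcσ).add hQlim
    exact tendsto_of_tendsto_of_tendsto_of_le_of_le' tendsto_const_nhds hupper
      (Eventually.of_forall fun j => zero_le) (Eventually.of_forall hub)
  -- H₀ is a subgroup
  have hone : (1 : U) ∈ H₀ :=
    aux_mem_of_approx hH₀cl hmain
      (Eventually.of_forall fun j => (Gn (ψ (σ j))).one_mem) tendsto_const_nhds
  have hmul : ∀ a ∈ H₀, ∀ b ∈ H₀, a * b ∈ H₀ := by
    intro a ha b hb
    obtain ⟨ya, hya, hlya⟩ := aux_exists_approx hSne hmain ha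
    obtain ⟨yb, hyb, hlyb⟩ := aux_exists_approx hSne hmain hb
    exact aux_mem_of_approx hH₀cl hmain
      (Eventually.of_forall fun j => (Gn (ψ (σ j))).mul_mem (hya j) (hyb j))
      (hlya.mul hlyb)
  have hinv : ∀ a ∈ H₀, a⁻¹ ∈ H₀ := by
    intro a ha
    obtain ⟨ya, hya, hlya⟩ := aux_exists_approx hSne hmain ha
    exact aux_mem_of_approx hH₀cl hmain
      (Eventually.of_forall fun j => (Gn (ψ (σ j))).inv_mem (hya j)) hlya.inv
  refine ⟨⟨⟨⟨H₀, fun {a b} ha hb => hmul a ha b hb⟩, hone⟩, fun {a} ha => hinv a ha⟩,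
    ψ ∘ σ, hψmono.comp hσmono, hH₀cl, ?_, ?_⟩
  · rintro x ⟨g, _, rfl⟩
    exact g.2
  · have := (ENNReal.tendsto_toReal (by simp : (0 : ℝ≥0∞) ≠ ⊤)).comp hmain
    simpa [Metric.hausdorffDist, hausdorffEdist, Function.comp_def] using this
end

section
/- Let U be a group with a complete metric and G ≤ U a compact subgroup such that compact subgroups Hausdorff-close to G are conjugate to subgroups of G by elements close to 1 (Montgomery–Zippin property), and such that compact subgroups of equal dimension contained in one another are equal on identity components. Then: if K ≤ U is a compact subgroup of the same dimension as G, sufficiently close to G in the weak 0-topology (contained in a small neighborhood of G), the identity components K₀ and G₀ are conjugate in U. -/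
/-- Montgomery–Zippin style conjugacy of identity components: in a completely
metrized (Banach Lie) group `U` with a compact subgroup `G`, assuming
(i) the Montgomery–Zippin property (compact subgroups Hausdorff-close to `G`
are conjugate into `G` by elements close to `1`),
(ii) a conjugation-invariant dimension function on subgroups, and
(iii) that equidimensional compact subgroups contained in one another have the
same identity component, any compact subgroup `K` of the same dimension as `G`,
contained in a sufficiently small neighborhood of `G` (weak 0-topology), has
identity component conjugate in `U` to that of `G`. -/
theorem stmt_9 {U : Type*} [MetricSpace U] [CompleteSpace U] [Group U]
    [IsTopologicalGroup U]
    (dim : Subgroup U → ℕ)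
    (hdim_conj : ∀ (u : U) (K : Subgroup U),
      dim (K.map (MulAut.conj u).toMonoidHom) = dim K)
    (G : Subgroup U) (hG : IsCompact (G : Set U))
    (hMZ : ∀ ε > (0 : ℝ), ∃ δ > (0 : ℝ), ∀ K : Subgroup U, IsCompact (K : Set U) →
      (∀ x ∈ K, ∃ g ∈ G, dist x g < δ) →
      ∃ u : U, dist u 1 < ε ∧ K.map (MulAut.conj u).toMonoidHom ≤ G)
    (heq : ∀ K L : Subgroup U, IsCompact (K : Set U) → IsCompact (L : Set U) →
      K ≤ L → dim K = dim L →
      connectedComponentIn (K : Set U) 1 = connectedComponentIn (L : Set U) 1) :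
    ∃ δ > (0 : ℝ), ∀ K : Subgroup U, IsCompact (K : Set U) → dim K = dim G →
      (∀ x ∈ K, ∃ g ∈ G, dist x g < δ) →
      ∃ u : U, (fun g => u * g * u⁻¹) '' connectedComponentIn (K : Set U) 1 =
        connectedComponentIn (G : Set U) 1 := by
  obtain ⟨δ, hδ, h⟩ := hMZ 1 one_pos
  refine ⟨δ, hδ, fun K hK hdimK hclose => ?_⟩
  obtain ⟨u, -, hle⟩ := h K hK hclose
  refine ⟨u, ?_⟩
  let e : U ≃ₜ U := (Homeomorph.mulLeft u).trans (Homeomorph.mulRight u⁻¹)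
  have hef : ∀ g : U, e g = u * g * u⁻¹ := fun g => by
    simp [e, mul_assoc]
  have himg : e '' (K : Set U) = (K.map (MulAut.conj u).toMonoidHom : Set U) := by
    ext x
    simp only [Set.mem_image, Subgroup.coe_map, SetLike.mem_coe, hef]
    constructor
    · rintro ⟨y, hy, rfl⟩; exact ⟨y, hy, rfl⟩
    · rintro ⟨y, hy, rfl⟩; exact ⟨y, hy, rfl⟩
  have hKu : IsCompact ((K.map (MulAut.conj u).toMonoidHom : Set U)) := by
    rw [← himg]; exact hK.image e.continuous
  have key := heq (K.map (MulAut.conj u).toMonoidHom) G hKu hG hle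
    (by rw [hdim_conj, hdimK])
  have h1 : (1 : U) ∈ (K : Set U) := K.one_mem
  have himc := e.image_connectedComponentIn h1
  rw [himg, show e (1:U) = 1 by simp [hef]] at himc
  calc (fun g => u * g * u⁻¹) '' connectedComponentIn (K : Set U) 1
      = e '' connectedComponentIn (K : Set U) 1 := by
        apply Set.image_congr'; intro g; rw [hef]
    _ = connectedComponentIn (G : Set U) 1 := by rw [himc, key]
end

section
/- Let U be a Banach Lie group. If V is a sufficiently small symmetric neighborhood of 1 in U, then the sequence of iterated commutator sets V⁽⁰⁾ = V, V⁽ⁿ⁺¹⁾ = [V, V⁽ⁿ⁾] = {xyx⁻¹y⁻¹ : x ∈ V, y ∈ V⁽ⁿ⁾} is such that every neighborhood W of 1 contains V⁽ⁿ⁾ for all sufficiently large n (the iterated commutators converge to {1}). -/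
open scoped Manifold
open Filter


/-- Iterated commutator sets: `V⁽⁰⁾ = V`, `V⁽ⁿ⁺¹⁾ = [V, V⁽ⁿ⁾]`. -/
def commutatorSets {U : Type*} [Group U] (V : Set U) : ℕ → Set U
  | 0 => V
  | n + 1 => {z | ∃ x ∈ V, ∃ y ∈ commutatorSets V n, z = x * y * x⁻¹ * y⁻¹}

open Set Metric in
/-- In a Banach Lie group, for every sufficiently small symmetric open
neighborhood `V` of `1`, the iterated commutator sets `V⁽ⁿ⁾` converge to `{1}`:
every neighborhood `W` of `1` contains `V⁽ⁿ⁾` for all large `n`. -/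
theorem stmt_12
    {E : Type*} [NormedAddCommGroup E] [NormedSpace ℝ E] [CompleteSpace E]
    {U : Type*} [TopologicalSpace U] [ChartedSpace E U] [Group U]
    [IsTopologicalGroup U] [LieGroup 𝓘(ℝ, E) (⊤ : ℕ∞) U] :
    ∃ V₀ ∈ nhds (1 : U), ∀ V : Set U, V ⊆ V₀ → IsOpen V → (1 : U) ∈ V →
      V⁻¹ = V →
      ∀ W ∈ nhds (1 : U), ∀ᶠ n in atTop, commutatorSets V n ⊆ W := by
  set I : ModelWithCorners ℝ E E := 𝓘(ℝ, E)
  set φ : PartialEquiv U E := extChartAt I (1 : U) with hφ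
  set a₀ : E := φ 1 with ha₀
  -- the commutator map
  set g : U × U → U := fun p => p.1 * p.2 * p.1⁻¹ * p.2⁻¹ with hg
  have hgsmooth : ContMDiff (I.prod I) I ((⊤ : ℕ∞) : WithTop ℕ∞) g :=
    ((contMDiff_fst.mul contMDiff_snd).mul contMDiff_fst.inv).mul contMDiff_snd.inv
  -- written in charts
  set ψ : E × E → E := fun p => φ (g (φ.symm p.1, φ.symm p.2)) with hψ
  have hg11 : g (1, 1) = (1 : U) := by simp [hg]
  have hsymm0 : φ.symm a₀ = (1 : U) := extChartAt_to_inv (1 : U)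
  have hψa : ∀ a : E, ψ (a, a₀) = a₀ := by
    intro a; simp only [hψ, hg]; rw [hsymm0]; simp [ha₀]
  have hψb : ∀ b : E, ψ (a₀, b) = a₀ := by
    intro b; simp only [hψ, hg]; rw [hsymm0]; simp [ha₀]
  -- ψ is C¹ at (a₀, a₀)
  have hψC1 : ContDiffAt ℝ 1 ψ (a₀, a₀) := by
    have h := (hgsmooth.contMDiffAt (x := ((1 : U), (1 : U)))).of_le (WithTop.coe_le_coe.2 (le_top : (1:ℕ∞) ≤ ⊤))
    rw [contMDiffAt_iff] at h
    obtain ⟨-, h⟩ := h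
    rw [extChartAt_prod] at h
    simp only [hg11] at h
    have hr : Set.range (I.prod I) = Set.univ := by
      simp [I, modelWithCornersSelf_prod]
    rw [hr, contDiffWithinAt_univ] at h
    have h' : ContDiffAt ℝ 1
        (↑(extChartAt I (1 : U)) ∘ g ∘ ↑((extChartAt I (1 : U)).prod (extChartAt I (1 : U))).symm)
        (a₀, a₀) := h
    apply h'.congr_of_eventuallyEq
    filter_upwards with p
    rfl
  have hψdiff : DifferentiableAt ℝ ψ (a₀, a₀) := hψC1.differentiableAt one_ne_zero
  -- fderiv of ψ at (a₀,a₀) is 0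
  have hfd : fderiv ℝ ψ (a₀, a₀) = 0 := by
    set L := fderiv ℝ ψ (a₀, a₀) with hL
    have hpm1 : HasFDerivAt (fun a : E => (a, a₀)) (ContinuousLinearMap.inl ℝ E E) a₀ :=
      hasFDerivAt_prodMk_left a₀ a₀
    have hpm2 : HasFDerivAt (fun b : E => (a₀, b)) (ContinuousLinearMap.inr ℝ E E) a₀ :=
      hasFDerivAt_prodMk_right a₀ a₀
    have h1 : HasFDerivAt (ψ ∘ fun a : E => (a, a₀))
        (L.comp (ContinuousLinearMap.inl ℝ E E)) a₀ :=
      HasFDerivAt.comp a₀ hψdiff.hasFDerivAt hpm1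
    have h1' : HasFDerivAt (ψ ∘ fun a : E => (a, a₀)) (0 : E →L[ℝ] E) a₀ := by
      have he : (ψ ∘ fun a : E => (a, a₀)) = fun _ => a₀ := funext hψa
      rw [he]; exact hasFDerivAt_const _ _
    have e1 : L.comp (ContinuousLinearMap.inl ℝ E E) = 0 := h1.unique h1'
    have h2 : HasFDerivAt (ψ ∘ fun b : E => (a₀, b))
        (L.comp (ContinuousLinearMap.inr ℝ E E)) a₀ :=
      HasFDerivAt.comp a₀ hψdiff.hasFDerivAt hpm2
    have h2' : HasFDerivAt (ψ ∘ fun b : E => (a₀, b)) (0 : E →L[ℝ] E) a₀ := by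
      have he : (ψ ∘ fun b : E => (a₀, b)) = fun _ => a₀ := funext hψb
      rw [he]; exact hasFDerivAt_const _ _
    have e2 : L.comp (ContinuousLinearMap.inr ℝ E E) = 0 := h2.unique h2'
    refine ContinuousLinearMap.ext fun p => ?_
    have : p = (p.1, (0 : E)) + ((0 : E), p.2) := by simp
    rw [ContinuousLinearMap.zero_apply, this, map_add]
    have e1' := congrArg (fun T : E →L[ℝ] E => T p.1) e1
    have e2' := congrArg (fun T : E →L[ℝ] E => T p.2) e2
    simp only [ContinuousLinearMap.comp_apply, ContinuousLinearMap.inl_apply,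
      ContinuousLinearMap.inr_apply, ContinuousLinearMap.zero_apply] at e1' e2'
    rw [e1', e2', add_zero]
  -- Lipschitz with constant 1/2 on a neighborhood s of (a₀,a₀)
  obtain ⟨s, hs, hlip⟩ : ∃ s ∈ nhds (a₀, a₀), LipschitzOnWith (1/2) ψ s := by
    apply hψC1.exists_lipschitzOnWith_of_nnnorm_lt
    rw [hfd]; norm_num
  -- θ : coordinates → commutator in the group; continuous at (a₀,a₀)
  set θ : E × E → U := fun p => g (φ.symm p.1, φ.symm p.2) with hθ
  have hθcont : ContinuousAt θ (a₀, a₀) := by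
    have hsc : ContinuousAt φ.symm a₀ := continuousAt_extChartAt_symm (1 : U)
    have hgc : Continuous g := by continuity
    have hc1 : ContinuousAt ((φ.symm : E → U) ∘ (Prod.fst : E × E → E)) (a₀, a₀) :=
      ContinuousAt.comp (f := (Prod.fst : E × E → E)) (x := ((a₀, a₀) : E × E)) hsc continuousAt_fst
    have hc2 : ContinuousAt ((φ.symm : E → U) ∘ (Prod.snd : E × E → E)) (a₀, a₀) :=
      ContinuousAt.comp (f := (Prod.snd : E × E → E)) (x := ((a₀, a₀) : E × E)) hsc continuousAt_snd
    exact ContinuousAt.comp (x := ((a₀ : E), (a₀ : E))) hgc.continuousAt (hc1.prodMk hc2)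
  have hθ11 : θ (a₀, a₀) = 1 := by simp [hθ, hsymm0, hg]
  have hsrc : φ.source ∈ nhds (1 : U) := extChartAt_source_mem_nhds (1 : U)
  have hpre : θ ⁻¹' φ.source ∈ nhds (a₀, a₀) := hθcont.preimage_mem_nhds (hθ11 ▸ hsrc)
  -- choose r
  obtain ⟨r, hr0, hball⟩ : ∃ r > 0, ball (a₀, a₀) r ⊆ s ∩ θ ⁻¹' φ.source :=
    Metric.mem_nhds_iff.1 (Filter.inter_mem hs hpre)
  have hball' : ball a₀ r ×ˢ ball a₀ r ⊆ s ∩ θ ⁻¹' φ.source := by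
    rwa [← ball_prod_same] at hball
  -- the master neighborhood
  refine ⟨φ.source ∩ φ ⁻¹' ball a₀ r, ?_, ?_⟩
  · exact Filter.inter_mem hsrc
      ((continuousAt_extChartAt (1 : U)).preimage_mem_nhds (ball_mem_nhds _ hr0))
  intro V hV _ _ _ W hW
  -- key induction
  have key : ∀ n, ∀ z ∈ commutatorSets V n,
      z ∈ φ.source ∧ dist (φ z) a₀ < r * (1/2 : ℝ) ^ n := by
    intro n
    induction n with
    | zero =>
      intro z hz
      obtain ⟨h1, h2⟩ := hV hz
      exact ⟨h1, by simpa using h2⟩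
    | succ n ih =>
      rintro z ⟨x, hx, y, hy, rfl⟩
      obtain ⟨hxs, hxb⟩ := hV hx
      obtain ⟨hys, hyb⟩ := ih y hy
      have hxball : φ x ∈ ball a₀ r := hxb
      have hyball : φ y ∈ ball a₀ r := by
        rw [mem_ball]
        calc dist (φ y) a₀ < r * (1/2 : ℝ) ^ n := hyb
          _ ≤ r * 1 := by
            apply mul_le_mul_of_nonneg_left _ hr0.le
            exact pow_le_one₀ (by norm_num) (by norm_num)
          _ = r := mul_one r
      set p : E × E := (φ x, φ y) with hp
      set q : E × E := (φ x, a₀) with hq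
      have hpmem : p ∈ ball a₀ r ×ˢ ball a₀ r := ⟨hxball, hyball⟩
      have hqmem : q ∈ ball a₀ r ×ˢ ball a₀ r := ⟨hxball, mem_ball_self hr0⟩
      have hθp : θ p = x * y * x⁻¹ * y⁻¹ := by
        simp [hθ, hp, hg, φ.left_inv hxs, φ.left_inv hys]
      have hzsrc : x * y * x⁻¹ * y⁻¹ ∈ φ.source := by
        have := (hball' hpmem).2
        rwa [Set.mem_preimage, hθp] at this
      have hψp : ψ p = φ (x * y * x⁻¹ * y⁻¹) := by
        simp only [hψ, hp]
        rw [φ.left_inv hxs, φ.left_inv hys]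
      have hψq : ψ q = a₀ := hψa _
      refine ⟨hzsrc, ?_⟩
      have hld := hlip.dist_le_mul p (hball' hpmem).1 q (hball' hqmem).1
      have hdpq : dist p q = dist (φ y) a₀ := by
        simp [hp, hq, Prod.dist_eq, dist_self, dist_nonneg]
      rw [hψp, hψq, hdpq] at hld
      calc dist (φ (x * y * x⁻¹ * y⁻¹)) a₀ ≤ (1/2 : ℝ) * dist (φ y) a₀ := by
            simpa using hld
        _ < (1/2 : ℝ) * (r * (1/2) ^ n) := by
            apply mul_lt_mul_of_pos_left hyb (by norm_num)
        _ = r * (1/2) ^ (n + 1) := by ring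
  -- conclude
  have hWc : (fun u => φ.symm u) ⁻¹' W ∈ nhds a₀ := by
    have hsc : ContinuousAt φ.symm a₀ := continuousAt_extChartAt_symm (1 : U)
    exact hsc.preimage_mem_nhds (hsymm0 ▸ hW)
  obtain ⟨ε, hε0, hεsub⟩ := Metric.mem_nhds_iff.1 hWc
  have htend : Filter.Tendsto (fun n : ℕ => r * (1/2 : ℝ) ^ n) atTop (nhds 0) := by
    rw [show (0 : ℝ) = r * 0 by ring]
    exact (tendsto_pow_atTop_nhds_zero_of_lt_one (by norm_num) (by norm_num)).const_mul r
  filter_upwards [htend.eventually (gt_mem_nhds hε0)] with n hn z hz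
  obtain ⟨hzs, hzd⟩ := key n z hz
  have : φ z ∈ ball a₀ ε := by
    rw [mem_ball]
    exact hzd.trans hn
  have := hεsub this
  rwa [Set.mem_preimage, φ.left_inv hzs] at this
end

section
/- In the semidirect product U = T² ⋊ ℤ, where the generator of ℤ acts on T² = ℝ²/ℤ² by the matrix [[1,1],[0,1]], let G be the diagonal circle {(z,z) : z ∈ S¹} and Gₙ ≤ G the subgroup of elements whose entries are 2ⁿ-th roots of unity. Then Gₙ → G in the Hausdorff distance, the subgroup 2ⁿℤ ⊆ ℤ ⊆ U centralizes Gₙ for each n, but no nontrivial element of ℤ ⊆ U normalizes G. -/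
open Filter

noncomputable section

/-- The 2-torus `T² = ℝ²/ℤ²`. -/
abbrev T2 : Type := AddCircle (1 : ℝ) × AddCircle (1 : ℝ)

/-- The shear automorphism of `T²` induced by the matrix `[[1,1],[0,1]]`. -/
def shear : T2 ≃+ T2 where
  toFun p := (p.1 + p.2, p.2)
  invFun p := (p.1 - p.2, p.2)
  left_inv p := by simp
  right_inv p := by simp
  map_add' p q := by
    refine Prod.ext ?_ rfl
    show (p.1 + q.1) + (p.2 + q.2) = (p.1 + p.2) + (q.1 + q.2)
    abel

/-- The action of `ℤ` on `T²` generated by `shear`. -/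
def shearAction : Multiplicative ℤ →* MulAut (Multiplicative T2) :=
  zpowersHom _ (AddEquiv.toMultiplicative shear)

/-- The semidirect product `U = T² ⋊ ℤ`. -/
abbrev U17 : Type := SemidirectProduct (Multiplicative T2) (Multiplicative ℤ) shearAction

/-- The diagonal circle `G = {(z,z)} ⊆ T²`. -/
def diagSub : AddSubgroup T2 :=
  AddMonoidHom.range
    ({ toFun := fun z => (z, z), map_zero' := rfl,
       map_add' := fun _ _ => rfl } : AddCircle (1 : ℝ) →+ T2)

/-- The `m`-torsion subgroup of `T²`. -/
def tor (m : ℕ) : AddSubgroup T2 where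
  carrier := {p | m • p = 0}
  zero_mem' := by
    show m • (0 : T2) = 0
    rw [smul_zero]
  add_mem' := by
    intro a b ha hb
    simp only [Set.mem_setOf_eq] at *
    rw [smul_add, ha, hb, add_zero]
  neg_mem' := by
    intro a ha
    simp only [Set.mem_setOf_eq] at *
    rw [smul_neg, ha, neg_zero]

lemma shearAction_apply (k : ℤ) (p : T2) :
    shearAction (Multiplicative.ofAdd k) (Multiplicative.ofAdd p)
      = Multiplicative.ofAdd (p.1 + k • p.2, p.2) := by
  show ((AddEquiv.toMultiplicative shear) ^ k) (Multiplicative.ofAdd p) = _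
  induction k using Int.induction_on generalizing p with
  | zero => simp
  | succ n ih =>
      rw [zpow_add_one, MulAut.mul_apply]
      have h1 : (AddEquiv.toMultiplicative shear) (Multiplicative.ofAdd p)
          = Multiplicative.ofAdd (p.1 + p.2, p.2) := rfl
      rw [h1, ih]
      congr 1
      refine Prod.ext ?_ rfl
      show p.1 + p.2 + (n : ℤ) • p.2 = p.1 + ((n : ℤ) + 1) • p.2
      rw [add_smul, one_smul]; abel
  | pred n ih =>
      rw [zpow_sub_one, MulAut.mul_apply]
      have h1 : (AddEquiv.toMultiplicative shear)⁻¹ (Multiplicative.ofAdd p)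
          = Multiplicative.ofAdd (p.1 - p.2, p.2) := rfl
      rw [h1, ih]
      congr 1
      refine Prod.ext ?_ rfl
      show p.1 - p.2 + (-(n:ℤ)) • p.2 = p.1 + (-(n:ℤ) - 1) • p.2
      rw [sub_smul, one_smul]; abel

lemma dist_coe_le (x y : ℝ) :
    dist ((x : AddCircle (1:ℝ))) ((y : AddCircle (1:ℝ))) ≤ |x - y| := by
  rw [dist_eq_norm, ← AddCircle.coe_sub]
  simpa using QuotientAddGroup.norm_mk_le_norm (S := AddSubgroup.zmultiples (1:ℝ)) (m := x - y)

set_option maxHeartbeats 1000000 in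
/-- In `U = T² ⋊ ℤ` (shear action), with `G` the diagonal circle and
`Gₙ = G ∩ (2ⁿ-torsion)` the `2ⁿ`-th roots of unity in it:
`Gₙ → G` in Hausdorff distance, each `2ⁿℤ ⊆ ℤ ⊆ U` centralizes `Gₙ`, but no
nontrivial element of `ℤ ⊆ U` normalizes `G`. -/
theorem stmt_17 :
    Tendsto (fun n : ℕ =>
        Metric.hausdorffDist
          ((diagSub ⊓ tor (2 ^ n) : AddSubgroup T2) : Set T2)
          ((diagSub : AddSubgroup T2) : Set T2))
      atTop (nhds 0) ∧
    (∀ (n : ℕ) (k : ℤ), (2 ^ n : ℤ) ∣ k →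
      ∀ p ∈ diagSub ⊓ tor (2 ^ n),
        Commute (SemidirectProduct.inl (Multiplicative.ofAdd p) : U17)
          (SemidirectProduct.inr (Multiplicative.ofAdd k))) ∧
    (∀ k : ℤ, k ≠ 0 →
      ¬ ((fun s : U17 =>
            (SemidirectProduct.inr (Multiplicative.ofAdd k) : U17) * s *
              (SemidirectProduct.inr (Multiplicative.ofAdd k) : U17)⁻¹) ''
          (⇑SemidirectProduct.inl '' (⇑Multiplicative.ofAdd ''
            ((diagSub : AddSubgroup T2) : Set T2))) =
        ⇑SemidirectProduct.inl '' (⇑Multiplicative.ofAdd ''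
          ((diagSub : AddSubgroup T2) : Set T2)))) := by
  refine ⟨?_, ?_, ?_⟩
  · -- Hausdorff convergence
    have hb : ∀ n : ℕ,
        Metric.hausdorffDist
          ((diagSub ⊓ tor (2 ^ n) : AddSubgroup T2) : Set T2)
          ((diagSub : AddSubgroup T2) : Set T2) ≤ (1/2 : ℝ) ^ n := by
      intro n
      apply Metric.hausdorffDist_le_of_mem_dist (by positivity)
      · intro x hx
        exact ⟨x, hx.1, by simp⟩
      · rintro x ⟨z, rfl⟩
        obtain ⟨a, rfl⟩ := QuotientAddGroup.mk_surjective z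
        set j : ℤ := round ((2:ℝ) ^ n * a) with hj
        refine ⟨(((j / 2 ^ n : ℝ) : AddCircle (1:ℝ)), ((j / 2 ^ n : ℝ) : AddCircle (1:ℝ))),
          ⟨⟨_, rfl⟩, ?_⟩, ?_⟩
        · show (2 ^ n : ℕ) • (((j / 2 ^ n : ℝ) : AddCircle (1:ℝ)),
              ((j / 2 ^ n : ℝ) : AddCircle (1:ℝ))) = 0
          have h1 : (2 ^ n : ℕ) • ((j / 2 ^ n : ℝ) : AddCircle (1:ℝ)) = 0 := by
            rw [← QuotientAddGroup.mk_nsmul]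
            have : (2 ^ n : ℕ) • (j / 2 ^ n : ℝ) = (j : ℝ) := by
              rw [nsmul_eq_mul]; push_cast
              field_simp
            rw [this]
            rw [AddCircle.coe_eq_zero_iff]
            exact ⟨j, by simp⟩
          exact Prod.ext h1 h1
        · have hd : dist ((a : AddCircle (1:ℝ))) (((j / 2 ^ n : ℝ) : AddCircle (1:ℝ)))
              ≤ (1/2:ℝ) ^ n := by
            refine (dist_coe_le a (j / 2 ^ n)).trans ?_
            have h2 : a - (j:ℝ) / 2 ^ n = ((2:ℝ) ^ n * a - j) / 2 ^ n := by
              field_simp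
            rw [h2, abs_div, abs_of_pos (by positivity : (0:ℝ) < 2 ^ n)]
            rw [div_le_iff₀ (by positivity)]
            calc |(2:ℝ) ^ n * a - j| ≤ 1/2 := abs_sub_round _
              _ ≤ (1/2:ℝ) ^ n * 2 ^ n := by
                  rw [← mul_pow]
                  norm_num
          calc dist (((a:AddCircle (1:ℝ)), (a:AddCircle (1:ℝ))) : T2) _
              = max (dist ((a:AddCircle (1:ℝ))) (((j / 2 ^ n : ℝ) : AddCircle (1:ℝ))))
                  (dist ((a:AddCircle (1:ℝ))) (((j / 2 ^ n : ℝ) : AddCircle (1:ℝ)))) :=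
                Prod.dist_eq (y := (((j / 2 ^ n : ℝ) : AddCircle (1:ℝ)), ((j / 2 ^ n : ℝ) : AddCircle (1:ℝ))))
            _ ≤ (1/2:ℝ) ^ n := by rw [max_self]; exact hd
    have h0 : ∀ n : ℕ, (0:ℝ) ≤ Metric.hausdorffDist
          ((diagSub ⊓ tor (2 ^ n) : AddSubgroup T2) : Set T2)
          ((diagSub : AddSubgroup T2) : Set T2) :=
      fun n => Metric.hausdorffDist_nonneg
    exact squeeze_zero h0 hb
      (tendsto_pow_atTop_nhds_zero_of_lt_one (by norm_num) (by norm_num))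
  · -- centralizing
    rintro n k ⟨m, rfl⟩ p ⟨hpd, hpt⟩
    have hk : ((2:ℤ) ^ n * m) • p.2 = 0 := by
      have h2 : (2 ^ n : ℕ) • p = 0 := hpt
      have h2' : ((2:ℤ) ^ n) • p.2 = 0 := by
        have := congrArg Prod.snd h2
        simpa [← natCast_zsmul] using this
      rw [mul_comm, mul_smul, h2', smul_zero]
    have key : shearAction (Multiplicative.ofAdd ((2:ℤ) ^ n * m)) (Multiplicative.ofAdd p)
        = Multiplicative.ofAdd p := by
      rw [shearAction_apply, hk, add_zero]
    have := SemidirectProduct.inl_aut (φ := shearAction)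
      (Multiplicative.ofAdd ((2:ℤ) ^ n * m)) (Multiplicative.ofAdd p)
    rw [key] at this
    have h3 : (SemidirectProduct.inr (Multiplicative.ofAdd ((2:ℤ)^n*m)) : U17) *
        SemidirectProduct.inl (Multiplicative.ofAdd p) =
        SemidirectProduct.inl (Multiplicative.ofAdd p) *
        SemidirectProduct.inr (Multiplicative.ofAdd ((2:ℤ)^n*m)) := by
      rw [map_inv] at this
      exact mul_inv_eq_iff_eq_mul.mp this.symm
    exact h3.symm
  · -- no normalizing
    intro k hk h
    set z : ℝ := 1 / (2 * k) with hz
    have hp : (((z : AddCircle (1:ℝ)), (z : AddCircle (1:ℝ))) : T2) ∈ diagSub := ⟨_, rfl⟩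
    have hmem : (SemidirectProduct.inr (Multiplicative.ofAdd k) : U17) *
        SemidirectProduct.inl (Multiplicative.ofAdd
          (((z : AddCircle (1:ℝ)), (z : AddCircle (1:ℝ))) : T2)) *
        (SemidirectProduct.inr (Multiplicative.ofAdd k) : U17)⁻¹ ∈
        (⇑SemidirectProduct.inl '' (⇑Multiplicative.ofAdd ''
          ((diagSub : AddSubgroup T2) : Set T2))) := by
      rw [← h]
      exact ⟨_, ⟨_, ⟨_, hp, rfl⟩, rfl⟩, rfl⟩
    rw [show ((SemidirectProduct.inr (Multiplicative.ofAdd k) : U17))⁻¹ =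
        SemidirectProduct.inr (Multiplicative.ofAdd k)⁻¹ from (map_inv _ _).symm,
      ← SemidirectProduct.inl_aut, shearAction_apply] at hmem
    obtain ⟨x, ⟨q, ⟨w, hw⟩, hq⟩, hx⟩ := hmem
    rw [← hq] at hx
    have := SemidirectProduct.inl_injective hx
    have h4 := Multiplicative.ofAdd.injective this
    rw [← hw] at h4
    have h5 : w = (z : AddCircle (1:ℝ)) := congrArg Prod.snd h4
    have h6 := congrArg Prod.fst h4
    simp only [h5] at h6
    have h7 : k • ((z : ℝ) : AddCircle (1:ℝ)) = 0 := by
      have := h6.symm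
      simpa using this
    rw [← QuotientAddGroup.mk_zsmul, zsmul_eq_mul] at h7
    have h8 : (k : ℝ) * z = (1/2 : ℝ) := by
      rw [hz]
      field_simp
    rw [h8] at h7
    rw [AddCircle.coe_eq_zero_iff] at h7
    obtain ⟨m, hm⟩ := h7
    have hm' : (m : ℝ) = 1/2 := by simpa using hm
    have : (2 * m : ℤ) = 1 := by
      have : (2:ℝ) * m = 1 := by rw [hm']; norm_num
      exact_mod_cast this
    omega
end
end
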